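/- arXiv:2205.02968 — 3 statements merged into one kernel-verified Lean document; each statement's English description precedes it below -/
import Mathlib

section
/- Let 0 < ξ < 1, θ > −ξ, γ > ξ and p ≥ 1. Let (Z_i)_{i≥1} be i.i.d. nonnegative random variables with E[Z_1^p] < ∞, and let (P_i)_{i≥1} have the GEM(ξ,θ) distribution, independent of (Z_i)_{i≥1}. Then E[ (∑_{i=1}^∞ P_i^γ Z_i)^p ] < ∞. -/
open MeasureTheory Filter Set

/-- The Beta(a,b) distribution: the measure on `(0,1)` with density
`x^{a-1}(1-x)^{b-1} Γ(a+b)/(Γ(a)Γ(b))` with respect to Lebesgue measure. -/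
noncomputable def betaMeasure (a b : ℝ) : Measure ℝ :=
  (volume.restrict (Set.Ioo (0 : ℝ) 1)).withDensity fun x =>
    ENNReal.ofReal (x ^ (a - 1) * (1 - x) ^ (b - 1) *
      (Real.Gamma (a + b) / (Real.Gamma a * Real.Gamma b)))

section Aux

lemma betaCIntegrableOn {u v : ℝ} (hu : 0 < u) (hv : 0 < v) :
    IntegrableOn (fun x : ℝ => (x : ℂ) ^ ((u : ℂ) - 1) * (1 - (x : ℂ)) ^ ((v : ℂ) - 1))
      (Set.Ioo 0 1) := by
  have hc : IntervalIntegrable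
      (fun x : ℝ => (x : ℂ) ^ ((u : ℂ) - 1) * (1 - (x : ℂ)) ^ ((v : ℂ) - 1)) volume 0 1 :=
    Complex.betaIntegral_convergent (by simpa) (by simpa)
  exact ((intervalIntegrable_iff_integrableOn_Ioc_of_le zero_le_one).1 hc).mono_set
    Set.Ioo_subset_Ioc_self

lemma betaC_eq_real {u v x : ℝ} (hx : x ∈ Set.Ioo (0:ℝ) 1) :
    (x : ℂ) ^ ((u : ℂ) - 1) * (1 - (x : ℂ)) ^ ((v : ℂ) - 1)
      = ((x ^ (u - 1) * (1 - x) ^ (v - 1) : ℝ) : ℂ) := by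
  have hx0 : (0:ℝ) ≤ x := hx.1.le
  have hx1 : (0:ℝ) ≤ 1 - x := by linarith [hx.2]
  have e1 : (x : ℂ) ^ ((u : ℂ) - 1) = ((x ^ (u - 1) : ℝ) : ℂ) := by
    rw [Complex.ofReal_cpow hx0]; norm_num
  have e2 : (1 - (x : ℂ)) ^ ((v : ℂ) - 1) = (((1 - x) ^ (v - 1) : ℝ) : ℂ) := by
    rw [Complex.ofReal_cpow hx1]; push_cast; norm_num
  rw [e1, e2, ← Complex.ofReal_mul]

lemma betaIntegrableOn {u v : ℝ} (hu : 0 < u) (hv : 0 < v) :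
    IntegrableOn (fun x : ℝ => x ^ (u - 1) * (1 - x) ^ (v - 1)) (Set.Ioo 0 1) := by
  have hre : IntegrableOn
      (fun x : ℝ => ((x : ℂ) ^ ((u : ℂ) - 1) * (1 - (x : ℂ)) ^ ((v : ℂ) - 1)).re)
      (Set.Ioo 0 1) := (betaCIntegrableOn hu hv).re
  refine hre.congr_fun (fun x hx => ?_) measurableSet_Ioo
  beta_reduce; rw [betaC_eq_real hx, Complex.ofReal_re]

lemma betaIntegral_real {u v : ℝ} (hu : 0 < u) (hv : 0 < v) :
    ∫ x in Set.Ioo (0:ℝ) 1, x ^ (u - 1) * (1 - x) ^ (v - 1)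
      = Real.Gamma u * Real.Gamma v / Real.Gamma (u + v) := by
  have hG : Complex.Gamma ((u : ℂ) + v) = (Real.Gamma (u + v) : ℂ) := by
    rw [← Complex.ofReal_add, Complex.Gamma_ofReal]
  have hGne : (Real.Gamma (u + v) : ℂ) ≠ 0 :=
    Complex.ofReal_ne_zero.2 (Real.Gamma_pos_of_pos (by linarith : (0:ℝ) < u + v)).ne'
  have hbeta := Complex.Gamma_mul_Gamma_eq_betaIntegral (s := u) (t := v) (by simpa) (by simpa)
  rw [hG, Complex.Gamma_ofReal, Complex.Gamma_ofReal] at hbeta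
  have hbeta2 : Complex.betaIntegral u v
      = ((Real.Gamma u * Real.Gamma v / Real.Gamma (u + v) : ℝ) : ℂ) := by
    push_cast
    rw [eq_div_iff hGne]
    linear_combination - hbeta
  calc ∫ x in Set.Ioo (0:ℝ) 1, x ^ (u - 1) * (1 - x) ^ (v - 1)
      = ∫ x in Set.Ioo (0:ℝ) 1,
          ((x : ℂ) ^ ((u : ℂ) - 1) * (1 - (x : ℂ)) ^ ((v : ℂ) - 1)).re := by
        refine integral_congr_ae ?_
        filter_upwards [ae_restrict_mem measurableSet_Ioo] with x hx
        rw [betaC_eq_real hx, Complex.ofReal_re]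
    _ = (∫ x in Set.Ioo (0:ℝ) 1,
          (x : ℂ) ^ ((u : ℂ) - 1) * (1 - (x : ℂ)) ^ ((v : ℂ) - 1)).re :=
        integral_re (betaCIntegrableOn hu hv)
    _ = (Complex.betaIntegral u v).re := by
        rw [Complex.betaIntegral, intervalIntegral.integral_of_le zero_le_one,
          integral_Ioc_eq_integral_Ioo]
    _ = Real.Gamma u * Real.Gamma v / Real.Gamma (u + v) := by
        rw [hbeta2, Complex.ofReal_re]

lemma lintegral_beta_kernel {s r : ℝ} (hs : 0 < s) (hr : 0 < r) {c : ℝ} (hc : 0 ≤ c) :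
    ∫⁻ x in Set.Ioo (0:ℝ) 1, ENNReal.ofReal (x ^ (s - 1) * (1 - x) ^ (r - 1) * c)
      = ENNReal.ofReal (Real.Gamma s * Real.Gamma r / Real.Gamma (s + r) * c) := by
  rw [← betaIntegral_real hs hr, ← integral_mul_const]
  rw [← ofReal_integral_eq_lintegral_ofReal (((betaIntegrableOn hs hr)).mul_const c) ?_]
  · filter_upwards [ae_restrict_mem measurableSet_Ioo] with x hx
    have h1 : (0:ℝ) ≤ x ^ (s - 1) := Real.rpow_nonneg hx.1.le _
    have h2 : (0:ℝ) ≤ (1 - x) ^ (r - 1) := Real.rpow_nonneg (by linarith [hx.2]) _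
    positivity

lemma betaMeasure_moment (a b u : ℝ) (ha : 0 < a) (hb : 0 < b) (hu : 0 ≤ u) :
    ∫⁻ x, ENNReal.ofReal x ^ u ∂betaMeasure a b
      = ENNReal.ofReal (Real.Gamma (a + u) * Real.Gamma (a + b)
          / (Real.Gamma a * Real.Gamma (a + b + u))) := by
  have hmd : Measurable (fun x : ℝ => ENNReal.ofReal (x ^ (a - 1) * (1 - x) ^ (b - 1) *
      (Real.Gamma (a + b) / (Real.Gamma a * Real.Gamma b)))) := by fun_prop
  have hmg : Measurable (fun x : ℝ => ENNReal.ofReal x ^ u) := by fun_prop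
  rw [betaMeasure, lintegral_withDensity_eq_lintegral_mul _ hmd hmg]
  set c := Real.Gamma (a + b) / (Real.Gamma a * Real.Gamma b) with hcdef
  have hc : 0 ≤ c := by
    have := Real.Gamma_pos_of_pos ha
    have := Real.Gamma_pos_of_pos hb
    have := Real.Gamma_pos_of_pos (by linarith : (0:ℝ) < a + b)
    positivity
  have : ∫⁻ x in Set.Ioo (0:ℝ) 1,
        (ENNReal.ofReal (x ^ (a - 1) * (1 - x) ^ (b - 1) * c) * ENNReal.ofReal x ^ u)
      = ∫⁻ x in Set.Ioo (0:ℝ) 1,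
        ENNReal.ofReal (x ^ (a + u - 1) * (1 - x) ^ (b - 1) * c) := by
    refine setLIntegral_congr_fun measurableSet_Ioo (fun x hx => ?_)
    have hx0 : (0:ℝ) < x := hx.1
    have n1 : (0:ℝ) ≤ x ^ (a - 1) := Real.rpow_nonneg hx0.le _
    have n2 : (0:ℝ) ≤ (1 - x) ^ (b - 1) := Real.rpow_nonneg (by linarith [hx.2]) _
    rw [ENNReal.ofReal_rpow_of_nonneg hx0.le hu,
      ← ENNReal.ofReal_mul (mul_nonneg (mul_nonneg n1 n2) hc)]
    congr 1
    rw [show a + u - 1 = u + (a - 1) by ring, Real.rpow_add hx0]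
    ring
  calc ∫⁻ x in Set.Ioo (0:ℝ) 1,
        ((fun x => ENNReal.ofReal (x ^ (a - 1) * (1 - x) ^ (b - 1) * c)) *
          (fun x => ENNReal.ofReal x ^ u)) x
      = ∫⁻ x in Set.Ioo (0:ℝ) 1,
        ENNReal.ofReal (x ^ (a + u - 1) * (1 - x) ^ (b - 1) * c) := this
    _ = ENNReal.ofReal (Real.Gamma (a + u) * Real.Gamma b / Real.Gamma (a + u + b) * c) :=
        lintegral_beta_kernel (by linarith) hb hc
    _ = ENNReal.ofReal (Real.Gamma (a + u) * Real.Gamma (a + b)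
          / (Real.Gamma a * Real.Gamma (a + b + u))) := by
        congr 1
        have g1 := (Real.Gamma_pos_of_pos ha).ne'
        have g2 := (Real.Gamma_pos_of_pos hb).ne'
        have g3 := (Real.Gamma_pos_of_pos (by linarith : (0:ℝ) < a + u + b)).ne'
        rw [hcdef, show a + b + u = a + u + b by ring]
        field_simp

lemma betaMeasure_moment_one_sub (a b u : ℝ) (ha : 0 < a) (hb : 0 < b) (hu : 0 ≤ u) :
    ∫⁻ x, ENNReal.ofReal (1 - x) ^ u ∂betaMeasure a b
      = ENNReal.ofReal (Real.Gamma (b + u) * Real.Gamma (a + b)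
          / (Real.Gamma b * Real.Gamma (a + b + u))) := by
  have hmd : Measurable (fun x : ℝ => ENNReal.ofReal (x ^ (a - 1) * (1 - x) ^ (b - 1) *
      (Real.Gamma (a + b) / (Real.Gamma a * Real.Gamma b)))) := by fun_prop
  have hmg : Measurable (fun x : ℝ => ENNReal.ofReal (1 - x) ^ u) := by fun_prop
  rw [betaMeasure, lintegral_withDensity_eq_lintegral_mul _ hmd hmg]
  set c := Real.Gamma (a + b) / (Real.Gamma a * Real.Gamma b) with hcdef
  have hc : 0 ≤ c := by
    have := Real.Gamma_pos_of_pos ha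
    have := Real.Gamma_pos_of_pos hb
    have := Real.Gamma_pos_of_pos (by linarith : (0:ℝ) < a + b)
    positivity
  have : ∫⁻ x in Set.Ioo (0:ℝ) 1,
        (ENNReal.ofReal (x ^ (a - 1) * (1 - x) ^ (b - 1) * c) * ENNReal.ofReal (1 - x) ^ u)
      = ∫⁻ x in Set.Ioo (0:ℝ) 1,
        ENNReal.ofReal (x ^ (a - 1) * (1 - x) ^ (b + u - 1) * c) := by
    refine setLIntegral_congr_fun measurableSet_Ioo (fun x hx => ?_)
    have hx0 : (0:ℝ) < 1 - x := by linarith [hx.2]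
    have n1 : (0:ℝ) ≤ x ^ (a - 1) := Real.rpow_nonneg hx.1.le _
    have n2 : (0:ℝ) ≤ (1 - x) ^ (b - 1) := Real.rpow_nonneg hx0.le _
    rw [ENNReal.ofReal_rpow_of_nonneg hx0.le hu,
      ← ENNReal.ofReal_mul (mul_nonneg (mul_nonneg n1 n2) hc)]
    congr 1
    rw [show b + u - 1 = u + (b - 1) by ring, Real.rpow_add hx0]
    ring
  calc ∫⁻ x in Set.Ioo (0:ℝ) 1,
        ((fun x => ENNReal.ofReal (x ^ (a - 1) * (1 - x) ^ (b - 1) * c)) *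
          (fun x => ENNReal.ofReal (1 - x) ^ u)) x
      = ∫⁻ x in Set.Ioo (0:ℝ) 1,
        ENNReal.ofReal (x ^ (a - 1) * (1 - x) ^ (b + u - 1) * c) := this
    _ = ENNReal.ofReal (Real.Gamma a * Real.Gamma (b + u) / Real.Gamma (a + (b + u)) * c) :=
        lintegral_beta_kernel ha (by linarith) hc
    _ = ENNReal.ofReal (Real.Gamma (b + u) * Real.Gamma (a + b)
          / (Real.Gamma b * Real.Gamma (a + b + u))) := by
        congr 1
        have g1 := (Real.Gamma_pos_of_pos ha).ne'
        have g2 := (Real.Gamma_pos_of_pos hb).ne'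
        have g3 := (Real.Gamma_pos_of_pos (by linarith : (0:ℝ) < a + (b + u))).ne'
        rw [hcdef, show a + b + u = a + (b + u) by ring]
        field_simp

-- support lemma
lemma betaMeasure_ae_Ioo (a b : ℝ) : ∀ᵐ x ∂betaMeasure a b, x ∈ Set.Ioo (0:ℝ) 1 := by
  refine ae_iff.2 ?_
  rw [show {x : ℝ | ¬ x ∈ Set.Ioo (0:ℝ) 1} = (Set.Ioo (0:ℝ) 1)ᶜ from rfl, betaMeasure,
    withDensity_apply _ measurableSet_Ioo.compl,
    Measure.restrict_restrict measurableSet_Ioo.compl]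
  simp

variable {Ω : Type*} [MeasurableSpace Ω] {μ : Measure Ω}

lemma lintegral_prod_range_of_iIndepFun [IsProbabilityMeasure μ]
    (F : ℕ → Ω → ENNReal) (hind : ProbabilityTheory.iIndepFun F μ)
    (hmeas : ∀ i, Measurable (F i)) (n : ℕ) :
    ∫⁻ ω, ∏ j ∈ Finset.range n, F j ω ∂μ = ∏ j ∈ Finset.range n, ∫⁻ ω, F j ω ∂μ := by
  induction n with
  | zero => simp
  | succ n ih =>
    have hindep := hind.indepFun_prod_range_succ hmeas n
    have hprodmeas : Measurable (∏ j ∈ Finset.range n, F j) := by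
      rw [Finset.prod_fn]
      exact Finset.measurable_prod _ fun i _ => hmeas i
    have h2 := ProbabilityTheory.lintegral_mul_eq_lintegral_mul_lintegral_of_indepFun
      hprodmeas (hmeas n) hindep
    simp only [Pi.mul_apply, Finset.prod_apply] at h2
    calc ∫⁻ ω, ∏ j ∈ Finset.range (n+1), F j ω ∂μ
        = ∫⁻ ω, (∏ j ∈ Finset.range n, F j ω) * F n ω ∂μ := by
          refine lintegral_congr fun ω => ?_
          rw [Finset.prod_range_succ]
      _ = (∫⁻ ω, ∏ j ∈ Finset.range n, F j ω ∂μ) * ∫⁻ ω, F n ω ∂μ := h2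
      _ = ∏ j ∈ Finset.range (n+1), ∫⁻ ω, F j ω ∂μ := by
          rw [Finset.prod_range_succ, ih]

lemma lintegral_tsum_rpow_le {p : ℝ} (hp : 1 ≤ p) (f : ℕ → Ω → ENNReal)
    (hf : ∀ i, Measurable (f i)) :
    ∫⁻ ω, (∑' i, f i ω) ^ p ∂μ ≤ (∑' i, (∫⁻ ω, f i ω ^ p ∂μ) ^ (1 / p)) ^ p := by
  have hp0 : 0 < p := lt_of_lt_of_le one_pos hp
  have key : ∀ n, (∫⁻ ω, (∑ i ∈ Finset.range n, f i ω) ^ p ∂μ) ^ (1 / p)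
      ≤ ∑ i ∈ Finset.range n, (∫⁻ ω, f i ω ^ p ∂μ) ^ (1 / p) := by
    intro n
    induction n with
    | zero =>
      simp only [Finset.range_zero, Finset.sum_empty]
      rw [ENNReal.zero_rpow_of_pos hp0, lintegral_zero,
        ENNReal.zero_rpow_of_pos (by positivity : 0 < 1 / p)]
    | succ n ih =>
      have hmeasS : Measurable (fun ω => ∑ i ∈ Finset.range n, f i ω) := by
        apply Finset.measurable_sum; exact fun i _ => hf i
      have h2 := ENNReal.lintegral_Lp_add_le (μ := μ)
        hmeasS.aemeasurable (hf n).aemeasurable hp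
      calc (∫⁻ ω, (∑ i ∈ Finset.range (n+1), f i ω) ^ p ∂μ) ^ (1 / p)
          = (∫⁻ ω, (((fun ω => ∑ i ∈ Finset.range n, f i ω) + f n) ω) ^ p ∂μ) ^ (1 / p) := by
            congr 1; refine lintegral_congr fun ω => ?_
            simp [Finset.sum_range_succ]
        _ ≤ (∫⁻ ω, (∑ i ∈ Finset.range n, f i ω) ^ p ∂μ) ^ (1 / p)
              + (∫⁻ ω, f n ω ^ p ∂μ) ^ (1 / p) := h2
        _ ≤ ∑ i ∈ Finset.range (n+1), (∫⁻ ω, f i ω ^ p ∂μ) ^ (1 / p) := by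
            rw [Finset.sum_range_succ]; exact add_le_add_left ih _
  -- pass to the limit
  have hmono : ∀ ω, Monotone (fun n => (∑ i ∈ Finset.range n, f i ω) ^ p) := by
    intro ω m n hmn
    exact ENNReal.rpow_le_rpow (Finset.sum_le_sum_of_subset
      (Finset.range_subset_range.2 hmn)) hp0.le
  have htsum : ∀ ω, (∑' i, f i ω) ^ p = ⨆ n, (∑ i ∈ Finset.range n, f i ω) ^ p := by
    intro ω
    rw [ENNReal.tsum_eq_iSup_nat]
    apply le_antisymm
    · -- (⨆ S_n)^p ≤ ⨆ (S_n^p)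
      set b := ⨆ n, (∑ i ∈ Finset.range n, f i ω) ^ p with hb
      have : ∀ n, (∑ i ∈ Finset.range n, f i ω) ≤ b ^ (1 / p) := by
        intro n
        have h1 : (∑ i ∈ Finset.range n, f i ω) ^ p ≤ b :=
          le_iSup (fun k => (∑ i ∈ Finset.range k, f i ω) ^ p) n
        have := ENNReal.rpow_le_rpow h1 (by positivity : (0:ℝ) ≤ 1 / p)
        rwa [← ENNReal.rpow_mul, mul_one_div, div_self hp0.ne', ENNReal.rpow_one] at this
      have h2 : (⨆ n, ∑ i ∈ Finset.range n, f i ω) ≤ b ^ (1 / p) := iSup_le this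
      calc (⨆ n, ∑ i ∈ Finset.range n, f i ω) ^ p ≤ (b ^ (1 / p)) ^ p :=
            ENNReal.rpow_le_rpow h2 hp0.le
        _ = b := by rw [← ENNReal.rpow_mul, one_div_mul_cancel hp0.ne', ENNReal.rpow_one]
    · exact iSup_le fun n => ENNReal.rpow_le_rpow
        (le_iSup (fun k => ∑ a ∈ Finset.range k, f a ω) n) hp0.le
  calc ∫⁻ ω, (∑' i, f i ω) ^ p ∂μ
      = ∫⁻ ω, ⨆ n, (∑ i ∈ Finset.range n, f i ω) ^ p ∂μ := lintegral_congr htsum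
    _ = ⨆ n, ∫⁻ ω, (∑ i ∈ Finset.range n, f i ω) ^ p ∂μ := by
        refine lintegral_iSup (fun n => ?_) (fun m n hmn ω => hmono ω hmn)
        have : Measurable (fun ω => ∑ i ∈ Finset.range n, f i ω) :=
          Finset.measurable_sum _ fun i _ => hf i
        fun_prop
    _ ≤ (∑' i, (∫⁻ ω, f i ω ^ p ∂μ) ^ (1 / p)) ^ p := by
        refine iSup_le fun n => ?_
        have h1 := key n
        have h2 : (∫⁻ ω, (∑ i ∈ Finset.range n, f i ω) ^ p ∂μ)
            = ((∫⁻ ω, (∑ i ∈ Finset.range n, f i ω) ^ p ∂μ) ^ (1 / p)) ^ p := by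
          rw [← ENNReal.rpow_mul, one_div_mul_cancel hp0.ne', ENNReal.rpow_one]
        rw [h2]
        refine ENNReal.rpow_le_rpow (h1.trans ?_) hp0.le
        exact ENNReal.sum_le_tsum _


lemma ratio_le_rpow {b t mu m : ℝ} (hb : 0 < b) (ht : 0 < t) (hmu : 1 ≤ mu) (hm : 1 ≤ m)
    (hcond : mu * (b + t) ≤ t * (m + 1)) : b / (b + t) ≤ (m / (m + 1)) ^ mu := by
  have hm1 : (0:ℝ) < m + 1 := by linarith
  have hbt : (0:ℝ) < b + t := by linarith
  have hs : (-1:ℝ) ≤ -(1 / (m + 1)) := by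
    rw [neg_le_neg_iff]
    rw [div_le_one hm1]; linarith
  have hbern := one_add_mul_self_le_rpow_one_add hs hmu
  have he : 1 + (-(1 / (m + 1))) = m / (m + 1) := by field_simp; ring
  rw [he] at hbern
  have h2 : b / (b + t) ≤ 1 + mu * (-(1 / (m + 1))) := by
    rw [div_le_iff₀ hbt]
    have key : mu * (1 / (m + 1)) * (b + t) ≤ t := by
      rw [show mu * (1 / (m + 1)) * (b + t) = mu * (b + t) / (m + 1) by ring,
        div_le_iff₀ hm1]
      nlinarith
    nlinarith
  exact h2.trans hbern

lemma summable_of_ratio_le {w : ℕ → ℝ} (hw : ∀ i, 0 ≤ w i) {lam : ℝ} (hlam : 1 < lam)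
    (M : ℕ) (hM : 1 ≤ M)
    (hstep : ∀ i, w (i + 1) ≤ w i * (((M:ℝ) + i) / ((M:ℝ) + i + 1)) ^ lam) :
    Summable w := by
  have hlam0 : (0:ℝ) < lam := by linarith
  have hbound : ∀ i, w i ≤ w 0 * ((M:ℝ) / ((M:ℝ) + i)) ^ lam := by
    intro i
    induction i with
    | zero =>
      simp only [Nat.cast_zero, add_zero]
      rw [div_self (by positivity : ((M:ℝ)) ≠ 0), Real.one_rpow, mul_one]
    | succ i ih =>
      have hMi : (0:ℝ) < (M:ℝ) + i := by positivity
      have hMi1 : (0:ℝ) < (M:ℝ) + i + 1 := by positivity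
      calc w (i + 1) ≤ w i * (((M:ℝ) + i) / ((M:ℝ) + i + 1)) ^ lam := hstep i
        _ ≤ (w 0 * ((M:ℝ) / ((M:ℝ) + i)) ^ lam) * (((M:ℝ) + i) / ((M:ℝ) + i + 1)) ^ lam := by
            apply mul_le_mul_of_nonneg_right ih (Real.rpow_nonneg (by positivity) _)
        _ = w 0 * ((M:ℝ) / ((M:ℝ) + ((i:ℕ) + 1 : ℕ))) ^ lam := by
            rw [mul_assoc, ← Real.mul_rpow (by positivity) (by positivity)]
            congr 2
            push_cast
            rw [div_mul_div_comm]
            rw [div_eq_div_iff (by positivity) (by positivity)]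
            ring
  have hcomp : ∀ i, w i ≤ (w 0 * (M:ℝ) ^ lam) * (1 / ((i:ℝ) + 1) ^ lam) := by
    intro i
    refine (hbound i).trans ?_
    have h1 : ((M:ℝ) / ((M:ℝ) + i)) ^ lam ≤ ((M:ℝ) / ((i:ℝ) + 1)) ^ lam := by
      apply Real.rpow_le_rpow (by positivity) ?_ hlam0.le
      apply div_le_div_of_nonneg_left (by positivity) (by positivity)
      have : (1:ℝ) ≤ (M:ℝ) := by exact_mod_cast hM
      linarith
    calc w 0 * ((M:ℝ) / ((M:ℝ) + i)) ^ lam ≤ w 0 * ((M:ℝ) / ((i:ℝ) + 1)) ^ lam :=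
          mul_le_mul_of_nonneg_left h1 (hw 0)
      _ = (w 0 * (M:ℝ) ^ lam) * (1 / ((i:ℝ) + 1) ^ lam) := by
          rw [Real.div_rpow (by positivity) (by positivity)]
          ring
  have hsum : Summable (fun i : ℕ => 1 / ((i:ℝ) + 1) ^ lam) := by
    have h := Real.summable_one_div_nat_rpow.2 hlam
    have h2 := (summable_nat_add_iff 1).2 h
    refine h2.congr fun n => ?_
    push_cast
    ring_nf
  exact Summable.of_nonneg_of_le hw hcomp (hsum.mul_left _)


lemma gamma_recursion {a x t s : ℝ} (ha : 0 < a) (hx : 0 < x) (ht : 0 < t) (has : a + s = 1) :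
    (Real.Gamma (a + t) * Real.Gamma (a + (x + s)) / (Real.Gamma a * Real.Gamma (a + (x + s) + t)))
      * (Real.Gamma (x + t) * Real.Gamma (a + x) / (Real.Gamma x * Real.Gamma (a + x + t)))
    = (Real.Gamma (a + t) * Real.Gamma (a + x) / (Real.Gamma a * Real.Gamma (a + x + t)))
      * (x / (x + t)) := by
  have e1 : a + (x + s) = x + 1 := by linarith
  have e2 : x + 1 + t = x + t + 1 := by ring
  rw [e1, e2, Real.Gamma_add_one hx.ne', Real.Gamma_add_one (by positivity : x + t ≠ 0)]
  have g1 := (Real.Gamma_pos_of_pos ha).ne'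
  have g2 := (Real.Gamma_pos_of_pos hx).ne'
  have g3 := (Real.Gamma_pos_of_pos (by positivity : (0:ℝ) < x + t)).ne'
  have g4 := (Real.Gamma_pos_of_pos (by positivity : (0:ℝ) < a + x + t)).ne'
  have g5 := (Real.Gamma_pos_of_pos (by positivity : (0:ℝ) < a + x)).ne'
  have hxt : x + t ≠ 0 := by positivity
  field_simp

lemma ennreal_prod_rpow {ι : Type*} (s : Finset ι) (f : ι → ENNReal) {r : ℝ} (hr : 0 ≤ r) :
    (∏ j ∈ s, f j) ^ r = ∏ j ∈ s, f j ^ r := by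
  classical
  induction s using Finset.induction with
  | empty => simp [ENNReal.one_rpow]
  | insert _ _ h ih =>
    rw [Finset.prod_insert h, Finset.prod_insert h, ENNReal.mul_rpow_of_nonneg _ _ hr, ih]

end Aux

/-- Lemma 5.3. Let `0 < ξ < 1`, `θ > -ξ`, `γ > ξ`, `p ≥ 1`. If
`(Z_i)` are i.i.d. nonnegative with `E[Z_1^p] < ∞` and `(P_i) ~ GEM(ξ,θ)` is independent
of `(Z_i)`, i.e. `P_i = W_i ∏_{j<i} (1-W_j)` with `(W_j)` independent,
`W_j ~ Beta(1-ξ, θ+jξ)`, then `E[(∑_i P_i^γ Z_i)^p] < ∞`. -/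
theorem gem_weighted_sum_moment
    {Ω : Type*} [MeasurableSpace Ω] (Pr : Measure Ω) [IsProbabilityMeasure Pr]
    (ξ θ γ p : ℝ) (hξ0 : 0 < ξ) (hξ1 : ξ < 1) (hθ : -ξ < θ) (hγ : ξ < γ) (hp : 1 ≤ p)
    -- the stick-breaking variables W_j, j ≥ 1 (here `W j` stands for `W_{j+1}`)
    (W : ℕ → Ω → ℝ) (hWmeas : ∀ j, Measurable (W j))
    (hWindep : ProbabilityTheory.iIndepFun W Pr)
    (hWlaw : ∀ j : ℕ, Measure.map (W j) Pr = betaMeasure (1 - ξ) (θ + (j + 1) * ξ))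
    -- the i.i.d. nonnegative variables Z_i with a p-th moment
    (Z : ℕ → Ω → ℝ) (hZmeas : ∀ i, Measurable (Z i))
    (hZnonneg : ∀ i ω, 0 ≤ Z i ω)
    (hZident : ∀ i : ℕ, Measure.map (Z i) Pr = Measure.map (Z 0) Pr)
    (hZindep : ProbabilityTheory.iIndepFun Z Pr)
    (hZmom : ∫⁻ ω, ENNReal.ofReal (Z 0 ω) ^ p ∂Pr < ⊤)
    -- (Z_i)_{i} is independent of (W_j)_{j}
    (hZW : ProbabilityTheory.IndepFun (fun ω i => Z i ω) (fun ω j => W j ω) Pr) :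
    -- with P_i := W_i ∏_{j<i} (1 - W_j), the GEM(ξ,θ) sequence:
    ∫⁻ ω, (∑' i : ℕ,
        ENNReal.ofReal ((W i ω * ∏ j ∈ Finset.range i, (1 - W j ω)) ^ γ * Z i ω)) ^ p
      ∂Pr < ⊤ := by
  classical
  have hp0 : (0:ℝ) < p := lt_of_lt_of_le one_pos hp
  have hγ0 : (0:ℝ) < γ := hξ0.trans hγ
  have ha : (0:ℝ) < 1 - ξ := by linarith
  have ht : (0:ℝ) < γ * p := mul_pos hγ0 hp0
  set t := γ * p with htdef
  set a := 1 - ξ with hadef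
  set b : ℕ → ℝ := fun j => θ + ((j:ℝ) + 1) * ξ with hbdef
  have hbpos : ∀ j, 0 < b j := by
    intro j
    have hj : (0:ℝ) ≤ (j:ℝ) := Nat.cast_nonneg j
    simp only [hbdef]
    nlinarith
  set A : ℕ → ℝ := fun i =>
    Real.Gamma (a + t) * Real.Gamma (a + b i) / (Real.Gamma a * Real.Gamma (a + b i + t))
    with hAdef
  set C : ℕ → ℝ := fun j =>
    Real.Gamma (b j + t) * Real.Gamma (a + b j) / (Real.Gamma (b j) * Real.Gamma (a + b j + t))
    with hCdef
  have hApos : ∀ i, 0 < A i := by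
    intro i
    have hbi := hbpos i
    have h1 := Real.Gamma_pos_of_pos (by linarith : (0:ℝ) < a + t)
    have h2 := Real.Gamma_pos_of_pos (by linarith : (0:ℝ) < a + b i)
    have h3 := Real.Gamma_pos_of_pos ha
    have h4 := Real.Gamma_pos_of_pos (by linarith : (0:ℝ) < a + b i + t)
    simp only [hAdef]
    exact div_pos (mul_pos h1 h2) (mul_pos h3 h4)
  have hCpos : ∀ j, 0 < C j := by
    intro j
    have hbj := hbpos j
    have h1 := Real.Gamma_pos_of_pos (by linarith : (0:ℝ) < b j + t)
    have h2 := Real.Gamma_pos_of_pos (by linarith : (0:ℝ) < a + b j)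
    have h3 := Real.Gamma_pos_of_pos hbj
    have h4 := Real.Gamma_pos_of_pos (by linarith : (0:ℝ) < a + b j + t)
    simp only [hCdef]
    exact div_pos (mul_pos h1 h2) (mul_pos h3 h4)
  set v : ℕ → ℝ := fun i => A i * ∏ j ∈ Finset.range i, C j with hvdef
  have hvpos : ∀ i, 0 < v i := by
    intro i
    simp only [hvdef]
    exact mul_pos (hApos i) (Finset.prod_pos fun j _ => hCpos j)
  set w : ℕ → ℝ := fun i => v i ^ (1 / p) with hwdef
  have hwnonneg : ∀ i, 0 ≤ w i := by
    intro i; simp only [hwdef]; exact Real.rpow_nonneg (hvpos i).le _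
  -- a.e. the W's are in (0,1)
  have hW01 : ∀ᵐ ω ∂Pr, ∀ j : ℕ, W j ω ∈ Set.Ioo (0:ℝ) 1 := by
    rw [ae_all_iff]
    intro j
    have h1 : ∀ᵐ x ∂(Measure.map (W j) Pr), x ∈ Set.Ioo (0:ℝ) 1 := by
      rw [hWlaw j]; exact betaMeasure_ae_Ioo _ _
    exact (ae_map_iff (hWmeas j).aemeasurable measurableSet_Ioo).1 h1
  -- the beta moments
  have hWmom : ∀ j, ∫⁻ ω, ENNReal.ofReal (W j ω) ^ t ∂Pr = ENNReal.ofReal (A j) := by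
    intro j
    have hmg : Measurable (fun x : ℝ => ENNReal.ofReal x ^ t) := by fun_prop
    have h1 : Measure.map (W j) Pr = betaMeasure a (b j) := by
      simp only [hbdef]; exact hWlaw j
    rw [← lintegral_map hmg (hWmeas j), h1,
      betaMeasure_moment a (b j) t ha (hbpos j) ht.le]
  have hCmom : ∀ j, ∫⁻ ω, ENNReal.ofReal (1 - W j ω) ^ t ∂Pr = ENNReal.ofReal (C j) := by
    intro j
    have hmg : Measurable (fun x : ℝ => ENNReal.ofReal (1 - x) ^ t) := by fun_prop
    have h1 : Measure.map (W j) Pr = betaMeasure a (b j) := by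
      simp only [hbdef]; exact hWlaw j
    rw [← lintegral_map hmg (hWmeas j), h1,
      betaMeasure_moment_one_sub a (b j) t ha (hbpos j) ht.le]
  -- the Z moment
  set K := ∫⁻ ω, ENNReal.ofReal (Z 0 ω) ^ p ∂Pr with hKdef
  have hZint : ∀ i, ∫⁻ ω, ENNReal.ofReal (Z i ω) ^ p ∂Pr = K := by
    intro i
    have hmg : Measurable (fun x : ℝ => ENNReal.ofReal x ^ p) := by fun_prop
    rw [hKdef, ← lintegral_map hmg (hZmeas i), hZident i, lintegral_map hmg (hZmeas 0)]
  -- the summands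
  set f : ℕ → Ω → ENNReal := fun i ω =>
    ENNReal.ofReal ((W i ω * ∏ j ∈ Finset.range i, (1 - W j ω)) ^ γ * Z i ω) with hfdef
  have hfmeas : ∀ i, Measurable (f i) := by
    intro i
    have h : Measurable (fun ω => W i ω * ∏ j ∈ Finset.range i, (1 - W j ω)) :=
      (hWmeas i).mul (Finset.measurable_prod _ fun j _ => measurable_const.sub (hWmeas j))
    have hz := hZmeas i
    simp only [hfdef]
    fun_prop
  -- the key moment computation
  have hMom : ∀ i, ∫⁻ ω, f i ω ^ p ∂Pr = ENNReal.ofReal (v i) * K := by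
    intro i
    set ψ : ℕ → ℝ → ENNReal := fun j x =>
      if j = i then ENNReal.ofReal x ^ t else ENNReal.ofReal (1 - x) ^ t with hψdef
    have hψi : ∀ x : ℝ, ψ i x = ENNReal.ofReal x ^ t := fun x => by simp [hψdef]
    have hψne : ∀ j, j ≠ i → ∀ x : ℝ, ψ j x = ENNReal.ofReal (1 - x) ^ t := fun j hj x => by
      simp [hψdef, hj]
    have hψmeas : ∀ j, Measurable (ψ j) := by
      intro j
      by_cases hj : j = i
      · simp only [hψdef, if_pos hj]; fun_prop
      · simp only [hψdef, if_neg hj]; fun_prop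
    have hFindep : ProbabilityTheory.iIndepFun
        (fun j ω => ψ j (W j ω)) Pr := hWindep.comp ψ hψmeas
    have hFmeas : ∀ j, Measurable (fun ω => ψ j (W j ω)) :=
      fun j => (hψmeas j).comp (hWmeas j)
    have step1 : ∫⁻ ω, f i ω ^ p ∂Pr
        = ∫⁻ ω, (∏ j ∈ Finset.range (i+1), ψ j (W j ω))
            * ENNReal.ofReal (Z i ω) ^ p ∂Pr := by
      refine lintegral_congr_ae ?_
      filter_upwards [hW01] with ω hω
      have hWipos : 0 < W i ω := (hω i).1
      have h1W : ∀ j, (0:ℝ) ≤ 1 - W j ω := fun j => by linarith [(hω j).2]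
      have hprodnn : (0:ℝ) ≤ ∏ j ∈ Finset.range i, (1 - W j ω) :=
        Finset.prod_nonneg fun j _ => h1W j
      have hPnn : (0:ℝ) ≤ W i ω * ∏ j ∈ Finset.range i, (1 - W j ω) :=
        mul_nonneg hWipos.le hprodnn
      simp only [hfdef]
      rw [ENNReal.ofReal_mul (Real.rpow_nonneg hPnn γ),
        ENNReal.mul_rpow_of_nonneg _ _ hp0.le,
        ← ENNReal.ofReal_rpow_of_nonneg hPnn hγ0.le,
        ← ENNReal.rpow_mul, ← htdef,
        ENNReal.ofReal_mul hWipos.le,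
        ENNReal.ofReal_prod_of_nonneg (fun j _ => h1W j),
        ENNReal.mul_rpow_of_nonneg _ _ ht.le,
        ennreal_prod_rpow _ _ ht.le]
      congr 1
      rw [Finset.prod_range_succ, hψi (W i ω),
        Finset.prod_congr rfl (fun j hj =>
          hψne j (Finset.mem_range.1 hj).ne (W j ω))]
      ring
    have hΦmeas : Measurable (fun vv : ℕ → ℝ =>
        ∏ j ∈ Finset.range (i+1), ψ j (vv j)) :=
      Finset.measurable_prod _ fun j _ => (hψmeas j).comp (measurable_pi_apply j)
    have hΨmeas : Measurable (fun vv : ℕ → ℝ => ENNReal.ofReal (vv i) ^ p) := by fun_prop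
    have hindep2 : ProbabilityTheory.IndepFun
        (fun ω => ∏ j ∈ Finset.range (i+1), ψ j (W j ω))
        (fun ω => ENNReal.ofReal (Z i ω) ^ p) Pr :=
      (hZW.comp hΨmeas hΦmeas).symm
    have hmeas1 : Measurable (fun ω => ∏ j ∈ Finset.range (i+1), ψ j (W j ω)) :=
      Finset.measurable_prod _ fun j _ => hFmeas j
    have hmeas2 : Measurable (fun ω => ENNReal.ofReal (Z i ω) ^ p) := by
      have hz := hZmeas i; fun_prop
    have step2 : ∫⁻ ω, (∏ j ∈ Finset.range (i+1), ψ j (W j ω))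
          * ENNReal.ofReal (Z i ω) ^ p ∂Pr
        = (∫⁻ ω, ∏ j ∈ Finset.range (i+1), ψ j (W j ω) ∂Pr) * K := by
      rw [ProbabilityTheory.lintegral_mul_eq_lintegral_mul_lintegral_of_indepFun''
        hmeas1.aemeasurable hmeas2.aemeasurable hindep2, hZint i]
    have step3 : ∫⁻ ω, ∏ j ∈ Finset.range (i+1), ψ j (W j ω) ∂Pr
        = ENNReal.ofReal (v i) := by
      rw [lintegral_prod_range_of_iIndepFun (fun j ω => ψ j (W j ω)) hFindep hFmeas (i+1),
        Finset.prod_range_succ]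
      have hlast : ∫⁻ ω, ψ i (W i ω) ∂Pr = ENNReal.ofReal (A i) := by
        simp only [hψi]; exact hWmom i
      have hother : ∀ j ∈ Finset.range i,
          ∫⁻ ω, ψ j (W j ω) ∂Pr = ENNReal.ofReal (C j) := by
        intro j hj
        simp only [hψne j (Finset.mem_range.1 hj).ne]; exact hCmom j
      rw [hlast, Finset.prod_congr rfl hother,
        ← ENNReal.ofReal_prod_of_nonneg (fun j _ => (hCpos j).le),
        ← ENNReal.ofReal_mul (Finset.prod_nonneg fun j _ => (hCpos j).le)]
      congr 1
      simp only [hvdef]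
      ring
    rw [step1, step2, step3]
  -- the recursion for v
  have hvsucc : ∀ i, v (i + 1) = v i * (b i / (b i + t)) := by
    intro i
    have hbsucc : b (i + 1) = b i + ξ := by simp only [hbdef]; push_cast; ring
    have hAsucc : A (i+1) * C i = A i * (b i / (b i + t)) := by
      have has : a + ξ = 1 := by simp only [hadef]; ring
      have key := gamma_recursion (a := a) (x := b i) (t := t) (s := ξ) ha (hbpos i) ht has
      simp only [hAdef, hCdef]
      rw [hbsucc]
      exact key
    simp only [hvdef]
    rw [Finset.prod_range_succ,
      show A (i+1) * ((∏ j ∈ Finset.range i, C j) * C i)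
        = (A (i+1) * C i) * ∏ j ∈ Finset.range i, C j from by ring,
      hAsucc]
    ring
  -- choice of the comparison exponent and offset
  set lam := (ξ + γ) / (2 * ξ) with hlamdef
  have hlam1 : 1 < lam := by
    rw [hlamdef, lt_div_iff₀ (by positivity)]
    linarith
  set mu := lam * p with hmudef
  have hmu1 : 1 ≤ mu := by
    rw [hmudef]; nlinarith
  have hmuxi : mu * ξ ≤ t := by
    have hlx : lam * ξ ≤ γ := by
      rw [hlamdef, div_mul_eq_mul_div, div_le_iff₀ (by positivity)]
      nlinarith
    rw [hmudef, htdef]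
    nlinarith
  obtain ⟨M0, hM0⟩ := exists_nat_ge (mu * (θ + ξ + t) / t)
  set M := M0 + 1 with hMdef
  have hM1 : 1 ≤ M := Nat.le_add_left 1 M0
  have hMreal : (1:ℝ) ≤ (M:ℝ) := by exact_mod_cast hM1
  have hcond : ∀ i : ℕ, mu * (b i + t) ≤ t * (((M:ℝ) + i) + 1) := by
    intro i
    have h1 : mu * (θ + ξ + t) ≤ t * M0 := by
      rw [div_le_iff₀ ht] at hM0
      linarith
    have h2 : mu * ξ * i ≤ t * i :=
      mul_le_mul_of_nonneg_right hmuxi (Nat.cast_nonneg i)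
    have hbi : b i = θ + ξ + ξ * i := by simp only [hbdef]; ring
    rw [hbi]
    have hMc : (M:ℝ) = (M0:ℝ) + 1 := by rw [hMdef]; push_cast; ring
    rw [hMc]
    nlinarith
  -- the step bound for w
  have hwstep : ∀ i, w (i + 1) ≤ w i * (((M:ℝ) + i) / ((M:ℝ) + i + 1)) ^ lam := by
    intro i
    have hm1 : (1:ℝ) ≤ (M:ℝ) + i := by
      have : (0:ℝ) ≤ (i:ℝ) := Nat.cast_nonneg i
      linarith
    have hratio : b i / (b i + t) ≤ (((M:ℝ) + i) / (((M:ℝ) + i) + 1)) ^ mu :=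
      ratio_le_rpow (hbpos i) ht hmu1 hm1 (hcond i)
    have heq : w (i+1) = w i * (b i / (b i + t)) ^ (1/p) := by
      simp only [hwdef]
      rw [hvsucc i, Real.mul_rpow (hvpos i).le
        (div_nonneg (hbpos i).le (add_nonneg (hbpos i).le ht.le))]
    rw [heq]
    refine mul_le_mul_of_nonneg_left ?_ (hwnonneg i)
    have hbase : (0:ℝ) ≤ ((M:ℝ) + i) / (((M:ℝ) + i) + 1) := by positivity
    have h2 : (b i / (b i + t)) ^ (1/p)
        ≤ ((((M:ℝ) + i) / (((M:ℝ) + i) + 1)) ^ mu) ^ (1/p) :=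
      Real.rpow_le_rpow (div_nonneg (hbpos i).le (add_nonneg (hbpos i).le ht.le))
        hratio (by positivity)
    refine h2.trans_eq ?_
    rw [← Real.rpow_mul hbase]
    congr 1
    rw [hmudef]
    field_simp
  have hsummable : Summable w :=
    summable_of_ratio_le hwnonneg hlam1 M hM1 hwstep
  -- final assembly
  calc ∫⁻ ω, (∑' i : ℕ,
        ENNReal.ofReal ((W i ω * ∏ j ∈ Finset.range i, (1 - W j ω)) ^ γ * Z i ω)) ^ p ∂Pr
      = ∫⁻ ω, (∑' i, f i ω) ^ p ∂Pr := by simp only [hfdef]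
    _ ≤ (∑' i, (∫⁻ ω, f i ω ^ p ∂Pr) ^ (1 / p)) ^ p :=
        lintegral_tsum_rpow_le hp f hfmeas
    _ < ⊤ := by
        have hci : ∀ i, (∫⁻ ω, f i ω ^ p ∂Pr) ^ (1/p)
            = ENNReal.ofReal (w i) * K ^ (1/p) := by
          intro i
          rw [hMom i, ENNReal.mul_rpow_of_nonneg _ _ (by positivity : (0:ℝ) ≤ 1/p),
            ENNReal.ofReal_rpow_of_nonneg (hvpos i).le (by positivity : (0:ℝ) ≤ 1/p)]
        rw [tsum_congr hci, ENNReal.tsum_mul_right,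
          ← ENNReal.ofReal_tsum_of_nonneg hwnonneg hsummable]
        exact ENNReal.rpow_lt_top_of_nonneg hp0.le
          (ENNReal.mul_lt_top ENNReal.ofReal_lt_top
            (ENNReal.rpow_lt_top_of_nonneg (by positivity) hZmom.ne)).ne
end

section
/- Let μ be a critical offspring distribution with μ(1) < 1, let (E,ℰ) be a measurable space, let (π_k)_{k≥0} be probability measures on E, and let 𝒫 ⊆ 𝔸 be a measurable set of marked ancestral lines. Let T be a BGW_μ tree with conditionally independent marks X_u ~ π_{out_T(u)} forming the marked tree T̃, and, on the event {∃v ∈ T : A(T̃,v) ∈ 𝒫}, let U be, conditionally on T̃, uniformly distributed on {v ∈ T : A(T̃,v) ∈ 𝒫}. Then for every measurable function F from marked pointed plane trees to [0,∞]: E[ F(T̃,U) · 1{∃v ∈ T : A(T̃,v) ∈ 𝒫} ] = ∑_{k≥0} E[ F(T̃*_k, U*_k) · 1{A(T̃*_k, U*_k) ∈ 𝒫} / #{v ∈ T*_k : A(T̃*_k, v) ∈ 𝒫} ], where (T̃*_k, U*_k) is the marked cut Kesten tree with spine of length k. -/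
open MeasureTheory Filter Set

/-- A plane tree: a finite, prefix-closed set of finite sequences of positive integers,
containing the empty sequence, such that the children of each vertex `v` are exactly
`v ++ [i]` for `1 ≤ i ≤ d` for some outdegree `d`. -/
structure PlaneTree where
  verts : Finset (List ℕ)
  root_mem : ([] : List ℕ) ∈ verts
  prefix_closed : ∀ v ∈ verts, ∀ u : List ℕ, u <+: v → u ∈ verts
  children : ∀ v ∈ verts, ∃ d : ℕ, ∀ i : ℕ, v ++ [i] ∈ verts ↔ 1 ≤ i ∧ i ≤ d

namespace PlaneTree

open Classical in
/-- The outdegree of a vertex `v` in a plane tree: its number of children. -/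
noncomputable def out (T : PlaneTree) (v : List ℕ) : ℕ :=
  (T.verts.filter fun w => ∃ i : ℕ, w = v ++ [i]).card

/-- The number of vertices of a plane tree. -/
def size (T : PlaneTree) : ℕ := T.verts.card

instance : Countable PlaneTree := by
  have h : Function.Injective fun T : PlaneTree => T.verts := by
    intro a b hab
    cases a; cases b
    simp only at hab
    subst hab
    rfl
  exact h.countable

end PlaneTree

/-- The Bienaymé–Galton–Watson weight of a plane tree. -/
noncomputable def BGWweight (μ : ℕ → ℝ) (T : PlaneTree) : ℝ :=
  ∏ v ∈ T.verts, μ (T.out v)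

/-- Tail of an offspring distribution `μ`: `μ([x,∞))`. -/
noncomputable def muTail (μ : ℕ → ℝ) (x : ℝ) : ℝ :=
  ∑' k : ℕ, if x ≤ k then μ k else 0

/-- A function is regularly varying at infinity with index `ρ`. -/
def RegularlyVarying (f : ℝ → ℝ) (ρ : ℝ) : Prop :=
  ∀ l : ℝ, 0 < l → Tendsto (fun x => f (l * x) / f x) atTop (nhds (l ^ ρ))

/-- The scaling sequence `b_n` associated to an offspring distribution in the domain
of attraction of an `α`-stable law. -/
noncomputable def bSeq (α : ℝ) (μ : ℕ → ℝ) (n : ℕ) : ℝ :=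
  ((α - 1) / Real.Gamma (2 - α)) ^ (-(1 / α)) * sInf {y : ℝ | 0 ≤ y ∧ muTail μ y ≤ 1 / n}

open Classical in
/-- The total `BGW_μ`-weight of plane trees with `n` vertices; the conditioned tree `T_n`
is well-defined iff this is nonzero. -/
noncomputable def Zpart (μ : ℕ → ℝ) (n : ℕ) : ENNReal :=
  ∑' T : PlaneTree, if T.size = n then ENNReal.ofReal (BGWweight μ T) else 0

section Spine

/-- A measurable space on lists, via the encoding of a list as its length together with
its entries. -/
instance listMeasurableSpace {β : Type*} [MeasurableSpace β] : MeasurableSpace (List β) :=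
  MeasurableSpace.comap
    (fun l : List β => (⟨l.length, fun i => l.get i⟩ : Σ n : ℕ, (Fin n → β)))
    inferInstance

variable {E : Type*} [MeasurableSpace E]

/-- The product law of the marks on the vertices of a fixed plane tree `t`: the marks are
independent, the mark at `v` having law `π_{out(v)}`. -/
noncomputable def markProd (π : ℕ → Measure E) (hπ : ∀ k, IsProbabilityMeasure (π k))
    (t : PlaneTree) : Measure ({v // v ∈ t.verts} → E) :=
  haveI : ∀ v : {v // v ∈ t.verts}, SigmaFinite (π (t.out v.val)) := fun v =>
    haveI := hπ (t.out v.val); inferInstance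
  Measure.pi fun v : {v // v ∈ t.verts} => π (t.out v.val)

/-- The law of the marked `BGW_μ` tree `T̃`: the tree `t` has probability
`∏_{v ∈ t} μ(out(v))` and, conditionally on `t`, the marks are independent with laws
`π_{out(v)}`. -/
noncomputable def markedBGW (μ : ℕ → ℝ) (π : ℕ → Measure E)
    (hπ : ∀ k, IsProbabilityMeasure (π k)) :
    Measure (Σ t : PlaneTree, ({v // v ∈ t.verts} → E)) :=
  Measure.sum fun t : PlaneTree =>
    ENNReal.ofReal (BGWweight μ t) • Measure.map (Sigma.mk t) (markProd π hπ t)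

open Classical in
/-- The probability that the cut Kesten tree with spine of length `k` equals the pointed
tree `(t,u)`: the spine vertices `[u]_0, …, [u]_{k-1}` are produced by the size-biased
law `μ*` together with a uniform choice of the child on the spine (contributing
`out·μ(out)·(1/out)` each), while every other vertex of `t` is the root of a grafted
`BGW_μ` tree and contributes `μ(out)`. -/
noncomputable def cutKestenWeight (μ : ℕ → ℝ) (k : ℕ) (t : PlaneTree) (u : List ℕ) : ℝ :=
  if u ∈ t.verts ∧ u.length = k then
    (∏ i ∈ Finset.range k,
        ((t.out (u.take i) : ℝ) * μ (t.out (u.take i)) * ((t.out (u.take i) : ℝ))⁻¹)) *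
      ∏ v ∈ t.verts.filter fun v => ¬(v <+: u ∧ v ≠ u), μ (t.out v)
  else 0

/-- The law of the marked cut Kesten tree `(T̃*_k, U*_k)` with spine of length `k`:
the pointed tree `(t,u)` has probability `cutKestenWeight μ k t u` and, conditionally on
it, the marks are independent with laws `π_{out(v)}`. -/
noncomputable def markedCutKesten (μ : ℕ → ℝ) (π : ℕ → Measure E)
    (hπ : ∀ k, IsProbabilityMeasure (π k)) (k : ℕ) :
    Measure (Σ t : PlaneTree, ({v // v ∈ t.verts} → E) × {v // v ∈ t.verts}) :=
  Measure.sum fun p : PlaneTree × List ℕ =>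
    ENNReal.ofReal (cutKestenWeight μ k p.1 p.2) •
      if h : p.2 ∈ p.1.verts then
        Measure.map (fun x => ⟨p.1, (x, ⟨p.2, h⟩)⟩) (markProd π hπ p.1)
      else 0

/-- The marked ancestral line `A(t̃,v)` of a vertex `v` in a marked tree: the list of
pairs (outdegree, mark) along the path `[v]_0, [v]_1, …, [v]_{|v|} = v` from the root
to `v`. -/
noncomputable def ancLine (t : PlaneTree) (x : {v // v ∈ t.verts} → E)
    (v : {v // v ∈ t.verts}) : List (ℕ × E) :=
  (List.range (v.val.length + 1)).map fun i =>
    (t.out (v.val.take i),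
      x ⟨v.val.take i, t.prefix_closed v.val v.property _ (List.take_prefix i v.val)⟩)

open Classical in
/-- The set of vertices of a marked tree whose marked ancestral line has the
property `PP`. -/
noncomputable def goodSet (PP : Set (List (ℕ × E))) (t : PlaneTree)
    (x : {v // v ∈ t.verts} → E) : Finset {v // v ∈ t.verts} :=
  t.verts.attach.filter fun v => ancLine t x v ∈ PP


section AuxSigma

variable {ι : Type*} {β : ι → Type*} [m : ∀ i, MeasurableSpace (β i)]

lemma measurableSet_sigma_iff' {s : Set (Σ i, β i)} :
    MeasurableSet s ↔ ∀ i, MeasurableSet (Sigma.mk i ⁻¹' s) := by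
  show MeasurableSet[⨅ i, (m i).map (Sigma.mk i)] s ↔ _
  rw [MeasurableSpace.measurableSet_iInf]
  exact Iff.rfl

lemma measurable_sigmaMk' (i : ι) : Measurable (@Sigma.mk ι β i) :=
  fun _ hs => measurableSet_sigma_iff'.1 hs i

lemma measurableEmbedding_sigmaMk' (i : ι) : MeasurableEmbedding (@Sigma.mk ι β i) := by
  refine ⟨sigma_mk_injective, measurable_sigmaMk' i, fun s hs => ?_⟩
  rw [measurableSet_sigma_iff']
  intro j
  rcases eq_or_ne j i with rfl | hj
  · rw [Set.preimage_image_eq _ sigma_mk_injective]; exact hs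
  · convert MeasurableSet.empty
    ext y
    simp only [Set.mem_preimage, Set.mem_image, Set.mem_empty_iff_false, iff_false]
    rintro ⟨z, -, h⟩
    exact hj (congrArg Sigma.fst h).symm

lemma measurableSet_singleton_sigma [∀ i, MeasurableSingletonClass (β i)] (x : Σ i, β i) :
    MeasurableSet ({x} : Set (Σ i, β i)) := by
  obtain ⟨i, y⟩ := x
  rw [measurableSet_sigma_iff']
  intro j
  rcases eq_or_ne j i with rfl | hj
  · convert measurableSet_singleton y using 1
    ext z
    simp [Sigma.mk.inj_iff]
  · convert MeasurableSet.empty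
    ext z
    simp [Sigma.mk.inj_iff, hj]

lemma measurableEmbedding_prodMkRight' {α γ : Type*} [MeasurableSpace α] [MeasurableSpace γ]
    [MeasurableSingletonClass γ] (c : γ) :
    MeasurableEmbedding (fun x : α => (x, c)) := by
  refine ⟨fun a b h => congrArg Prod.fst h, measurable_id.prodMk measurable_const,
    fun s hs => ?_⟩
  have himg : (fun x : α => (x, c)) '' s = s ×ˢ ({c} : Set γ) := by
    ext ⟨p1, p2⟩
    constructor
    · rintro ⟨x, hx, h⟩
      obtain ⟨rfl, rfl⟩ := Prod.mk.injEq .. ▸ h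
      exact ⟨hx, rfl⟩
    · rintro ⟨hp, (hc : p2 = c)⟩
      exact ⟨p1, hp, by rw [hc]⟩
  rw [himg]
  exact hs.prod (measurableSet_singleton c)

end AuxSigma

section AuxList

lemma listEnc_injective {β : Type*} :
    Function.Injective fun l : List β =>
      (⟨l.length, fun i => l.get i⟩ : Σ n : ℕ, (Fin n → β)) := by
  intro l1 l2 h
  rw [Sigma.ext_iff] at h
  obtain ⟨h1, h2⟩ := h
  apply List.ext_get h1
  intro n hn1 hn2
  have := (Fin.heq_fun_iff h1).1 h2 ⟨n, hn1⟩
  simpa using this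

instance : MeasurableSingletonClass (List ℕ) := by
  constructor
  intro l
  refine ⟨{(⟨l.length, fun i => l.get i⟩ : Σ n : ℕ, (Fin n → ℕ))},
    measurableSet_singleton_sigma _, ?_⟩
  ext m
  simp only [Set.mem_preimage, Set.mem_singleton_iff]
  exact ⟨fun h => listEnc_injective h, fun h => by rw [h]⟩

end AuxList


section AuxTree

lemma PlaneTree.out_pos (t : PlaneTree) {u : List ℕ} (hu : u ∈ t.verts) {i : ℕ}
    (hi : i < u.length) : t.out (u.take i) ≠ 0 := by
  classical
  intro h0
  have hmem : u.take (i + 1) ∈ t.verts := t.prefix_closed u hu _ (List.take_prefix _ _)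
  have heq : u.take (i + 1) = u.take i ++ [u[i]] := (List.take_concat_get' u i hi).symm
  have hmem2 : u.take i ++ [u[i]] ∈ t.verts.filter fun w => ∃ j : ℕ, w = u.take i ++ [j] :=
    Finset.mem_filter.2 ⟨heq ▸ hmem, ⟨u[i], rfl⟩⟩
  unfold PlaneTree.out at h0
  rw [Finset.card_eq_zero] at h0
  rw [h0] at hmem2
  simp at hmem2

lemma cutKestenWeight_ne (μ : ℕ → ℝ) (k : ℕ) (t : PlaneTree) (u : List ℕ)
    (h : ¬(u ∈ t.verts ∧ u.length = k)) : cutKestenWeight μ k t u = 0 := by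
  rw [cutKestenWeight, if_neg h]

lemma cutKestenWeight_eq (μ : ℕ → ℝ) (t : PlaneTree) {u : List ℕ} (hu : u ∈ t.verts) :
    cutKestenWeight μ u.length t u = BGWweight μ t := by
  classical
  rw [cutKestenWeight, if_pos ⟨hu, rfl⟩]
  have h1 : ∀ i ∈ Finset.range u.length,
      ((t.out (u.take i) : ℝ) * μ (t.out (u.take i)) * ((t.out (u.take i) : ℝ))⁻¹)
        = μ (t.out (u.take i)) := by
    intro i hi
    have hne : ((t.out (u.take i) : ℝ)) ≠ 0 :=
      Nat.cast_ne_zero.2 (t.out_pos hu (Finset.mem_range.1 hi))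
    rw [mul_comm (t.out (u.take i) : ℝ) (μ _), mul_assoc, mul_inv_cancel₀ hne, mul_one]
  rw [Finset.prod_congr rfl h1]
  have himg : t.verts.filter (fun v => v <+: u ∧ v ≠ u)
      = (Finset.range u.length).image fun i => u.take i := by
    ext v
    simp only [Finset.mem_filter, Finset.mem_image, Finset.mem_range]
    constructor
    · rintro ⟨hv, hpre, hne⟩
      refine ⟨v.length, ?_, (List.prefix_iff_eq_take.1 hpre).symm⟩
      rcases lt_or_eq_of_le hpre.length_le with h | h
      · exact h
      · exact absurd (hpre.eq_of_length h) hne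
    · rintro ⟨i, hi, rfl⟩
      refine ⟨t.prefix_closed u hu _ (List.take_prefix _ _), List.take_prefix _ _, fun h => ?_⟩
      have := congrArg List.length h
      simp only [List.length_take] at this
      omega
  have hprod : (∏ i ∈ Finset.range u.length, μ (t.out (u.take i)))
      = ∏ v ∈ t.verts.filter (fun v => v <+: u ∧ v ≠ u), μ (t.out v) := by
    have hinj : ∀ a ∈ Finset.range u.length, ∀ b ∈ Finset.range u.length,
        u.take a = u.take b → a = b := by
      intro a ha b hb hab
      have := congrArg List.length hab
      simp only [List.length_take] at this
      rw [Finset.mem_range] at ha hb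
      omega
    rw [himg]
    exact (Finset.prod_image (s := Finset.range u.length) (g := fun i => u.take i)
      (f := fun v => μ (t.out v)) hinj).symm
  rw [hprod, Finset.prod_filter_mul_prod_filter_not]
  rfl

variable {E : Type*} [MeasurableSpace E]

lemma measurable_ancLine (t : PlaneTree) (u : List ℕ) (hu : u ∈ t.verts) :
    Measurable fun x : ({v // v ∈ t.verts} → E) => ancLine t x ⟨u, hu⟩ := by
  intro s hs
  obtain ⟨s', hs', rfl⟩ := hs
  rw [← Set.preimage_comp]
  have key : ((fun l : List (ℕ × E) =>
        (⟨l.length, fun i => l.get i⟩ : Σ n : ℕ, (Fin n → ℕ × E))) ∘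
        fun x : ({v // v ∈ t.verts} → E) => ancLine t x ⟨u, hu⟩)
      = fun x => ⟨u.length + 1, fun i : Fin (u.length + 1) =>
          (t.out (u.take i.val),
            x ⟨u.take i.val, t.prefix_closed u hu _ (List.take_prefix i.val u)⟩)⟩ := by
    funext x
    have hlen : (ancLine t x ⟨u, hu⟩).length = u.length + 1 := by simp [ancLine]
    refine Sigma.ext hlen ((Fin.heq_fun_iff hlen).2 fun i => ?_)
    simp [ancLine, List.get_eq_getElem]
  rw [key]
  exact (measurable_sigmaMk' _).comp (measurable_pi_lambda _ fun i =>
    measurable_const.prodMk (measurable_pi_apply _)) hs'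

lemma measurable_goodCard (PP : Set (List (ℕ × E))) (hPP : MeasurableSet PP) (t : PlaneTree) :
    Measurable fun x : ({v // v ∈ t.verts} → E) => (goodSet PP t x).card := by
  classical
  have hcard : ∀ x : ({v // v ∈ t.verts} → E), (goodSet PP t x).card
      = ∑ v ∈ t.verts.attach, if ancLine t x v ∈ PP then 1 else 0 := by
    intro x
    rw [goodSet, Finset.card_filter]
  rw [show (fun x : ({v // v ∈ t.verts} → E) => (goodSet PP t x).card)
      = fun x => ∑ v ∈ t.verts.attach, if ancLine t x v ∈ PP then 1 else 0 from funext hcard]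
  refine Finset.measurable_sum _ fun v _ => ?_
  exact Measurable.ite (measurable_ancLine t v.1 v.2 hPP) measurable_const measurable_const

end AuxTree

/-- spine decomposition for marked BGW trees. For every nonnegative
measurable `F` on marked pointed plane trees,
`E[F(T̃,U) 1{∃ v, A(T̃,v) ∈ PP}] = ∑_k E[F(T̃*_k,U*_k) 1{A(T̃*_k,U*_k) ∈ PP} / #good]`,
where `U` is conditionally uniform on the vertices with property `PP` (so the left side is
the integral of the average of `F` over the good vertices), and `(T̃*_k,U*_k)` is the
marked cut Kesten tree with spine of length `k`. -/
theorem spine_decomposition_marked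
    (μ : ℕ → ℝ) (hμ0 : ∀ k, 0 ≤ μ k) (hμpmf : ∑' k, μ k = 1)
    (hcrit : ∑' k : ℕ, (k : ℝ) * μ k = 1) (hμ1 : μ 1 < 1)
    (π : ℕ → Measure E) (hπ : ∀ k, IsProbabilityMeasure (π k))
    (PP : Set (List (ℕ × E))) (hPP : MeasurableSet PP)
    (F : (Σ t : PlaneTree, ({v // v ∈ t.verts} → E) × {v // v ∈ t.verts}) → ENNReal)
    (hF : Measurable F) :
    ∫⁻ m, (((goodSet PP m.1 m.2).card : ENNReal))⁻¹ *
        ∑ u ∈ goodSet PP m.1 m.2, F ⟨m.1, (m.2, u)⟩ ∂(markedBGW μ π hπ) =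
      ∑' k : ℕ, ∫⁻ p,
          (@ite ENNReal (ancLine p.1 p.2.1 p.2.2 ∈ PP) (Classical.dec _)
            (((goodSet PP p.1 p.2.1).card : ENNReal))⁻¹ 0) * F p
          ∂(markedCutKesten μ π hπ k) := by
  classical
  have hGmeas : ∀ t : PlaneTree, Measurable fun x : ({v // v ∈ t.verts} → E) =>
      (((goodSet PP t x).card : ENNReal))⁻¹ := fun t =>
    (measurable_from_nat (f := fun n : ℕ => ((n : ENNReal))⁻¹)).comp
      (measurable_goodCard PP hPP t)
  have hIm : ∀ (t : PlaneTree) (u : {v // v ∈ t.verts}),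
      Measurable fun x : ({v // v ∈ t.verts} → E) =>
        (@ite ENNReal (ancLine t x u ∈ PP) (Classical.dec _)
          (((goodSet PP t x).card : ENNReal))⁻¹ 0) * F ⟨t, (x, u)⟩ := by
    intro t u
    refine (Measurable.ite ?_ (hGmeas t) measurable_const).mul
      (hF.comp ((measurable_sigmaMk' t).comp (measurable_id.prodMk measurable_const)))
    exact measurable_ancLine t u.1 u.2 hPP
  have hL : (∫⁻ m, (((goodSet PP m.1 m.2).card : ENNReal))⁻¹ *
        ∑ u ∈ goodSet PP m.1 m.2, F ⟨m.1, (m.2, u)⟩ ∂(markedBGW μ π hπ))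
      = ∑' t : PlaneTree, ∑ u ∈ t.verts.attach, ENNReal.ofReal (BGWweight μ t) *
          ∫⁻ x, (@ite ENNReal (ancLine t x u ∈ PP) (Classical.dec _)
            (((goodSet PP t x).card : ENNReal))⁻¹ 0) * F ⟨t, (x, u)⟩ ∂(markProd π hπ t) := by
    rw [markedBGW, lintegral_sum_measure]
    refine tsum_congr fun t => ?_
    rw [lintegral_smul_measure, (measurableEmbedding_sigmaMk' t).lintegral_map,
      ← Finset.mul_sum]
    congr 1
    rw [← lintegral_finset_sum _ fun u _ => hIm t u]
    refine lintegral_congr fun x => ?_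
    show (((goodSet PP t x).card : ENNReal))⁻¹ * ∑ u ∈ goodSet PP t x, F ⟨t, (x, u)⟩ = _
    rw [Finset.mul_sum, goodSet, Finset.sum_filter]
    refine Finset.sum_congr rfl fun u _ => ?_
    by_cases h : ancLine t x u ∈ PP <;> simp [h]
  have hR : ∀ k : ℕ, (∫⁻ p, (@ite ENNReal (ancLine p.1 p.2.1 p.2.2 ∈ PP) (Classical.dec _)
        (((goodSet PP p.1 p.2.1).card : ENNReal))⁻¹ 0) * F p ∂(markedCutKesten μ π hπ k))
      = ∑' q : PlaneTree × List ℕ,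
          if h : q.2 ∈ q.1.verts ∧ q.2.length = k then
            ENNReal.ofReal (BGWweight μ q.1) *
              ∫⁻ x, (@ite ENNReal (ancLine q.1 x ⟨q.2, h.1⟩ ∈ PP) (Classical.dec _)
                (((goodSet PP q.1 x).card : ENNReal))⁻¹ 0) * F ⟨q.1, (x, ⟨q.2, h.1⟩)⟩
                ∂(markProd π hπ q.1)
          else 0 := by
    intro k
    rw [markedCutKesten, lintegral_sum_measure]
    refine tsum_congr fun q => ?_
    rw [lintegral_smul_measure]
    by_cases h : q.2 ∈ q.1.verts ∧ q.2.length = k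
    · obtain ⟨h1, h2⟩ := h
      rw [dif_pos h1]
      subst h2
      rw [cutKestenWeight_eq μ q.1 h1, dif_pos (⟨h1, rfl⟩ : _ ∧ _)]
      congr 1
      exact ((measurableEmbedding_sigmaMk' q.1).comp
        (measurableEmbedding_prodMkRight' (⟨q.2, h1⟩ : {v // v ∈ q.1.verts}))).lintegral_map _
    · rw [dif_neg h, cutKestenWeight_ne μ k q.1 q.2 h]
      simp
  rw [hL, tsum_congr hR, ENNReal.tsum_comm, ENNReal.tsum_prod']
  refine tsum_congr fun t => ?_
  have hsum : ∀ u : List ℕ,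
      (∑' k : ℕ, (if h : u ∈ t.verts ∧ u.length = k then
          ENNReal.ofReal (BGWweight μ t) *
            ∫⁻ x, (@ite ENNReal (ancLine t x ⟨u, h.1⟩ ∈ PP) (Classical.dec _)
              (((goodSet PP t x).card : ENNReal))⁻¹ 0) * F ⟨t, (x, ⟨u, h.1⟩)⟩
              ∂(markProd π hπ t)
        else 0))
      = (if h : u ∈ t.verts then
          ENNReal.ofReal (BGWweight μ t) *
            ∫⁻ x, (@ite ENNReal (ancLine t x ⟨u, h⟩ ∈ PP) (Classical.dec _)
              (((goodSet PP t x).card : ENNReal))⁻¹ 0) * F ⟨t, (x, ⟨u, h⟩)⟩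
              ∂(markProd π hπ t)
        else 0) := by
    intro u
    by_cases hu : u ∈ t.verts
    · rw [dif_pos hu, tsum_eq_single u.length fun k hk => dif_neg fun hc => hk hc.2.symm]
      rw [dif_pos (⟨hu, rfl⟩ : _ ∧ _)]
    · rw [dif_neg hu]
      convert tsum_zero with k
      exact dif_neg fun hc => hu hc.1
  refine Eq.symm ?_
  calc (∑' u : List ℕ, ∑' k : ℕ, (if h : u ∈ t.verts ∧ u.length = k then
          ENNReal.ofReal (BGWweight μ t) *
            ∫⁻ x, (@ite ENNReal (ancLine t x ⟨u, h.1⟩ ∈ PP) (Classical.dec _)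
              (((goodSet PP t x).card : ENNReal))⁻¹ 0) * F ⟨t, (x, ⟨u, h.1⟩)⟩
              ∂(markProd π hπ t)
        else 0))
      = ∑' u : List ℕ, (if h : u ∈ t.verts then
          ENNReal.ofReal (BGWweight μ t) *
            ∫⁻ x, (@ite ENNReal (ancLine t x ⟨u, h⟩ ∈ PP) (Classical.dec _)
              (((goodSet PP t x).card : ENNReal))⁻¹ 0) * F ⟨t, (x, ⟨u, h⟩)⟩
              ∂(markProd π hπ t)
        else 0) := tsum_congr hsum
    _ = ∑ u ∈ t.verts, (if h : u ∈ t.verts then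
          ENNReal.ofReal (BGWweight μ t) *
            ∫⁻ x, (@ite ENNReal (ancLine t x ⟨u, h⟩ ∈ PP) (Classical.dec _)
              (((goodSet PP t x).card : ENNReal))⁻¹ 0) * F ⟨t, (x, ⟨u, h⟩)⟩
              ∂(markProd π hπ t)
        else 0) := tsum_eq_sum fun u hu => dif_neg hu
    _ = ∑ u ∈ t.verts.attach, (if h : u.val ∈ t.verts then
          ENNReal.ofReal (BGWweight μ t) *
            ∫⁻ x, (@ite ENNReal (ancLine t x ⟨u.val, h⟩ ∈ PP) (Classical.dec _)
              (((goodSet PP t x).card : ENNReal))⁻¹ 0) * F ⟨t, (x, ⟨u.val, h⟩)⟩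
              ∂(markProd π hπ t)
        else 0) := (Finset.sum_attach _ _).symm
    _ = ∑ u ∈ t.verts.attach, ENNReal.ofReal (BGWweight μ t) *
          ∫⁻ x, (@ite ENNReal (ancLine t x u ∈ PP) (Classical.dec _)
            (((goodSet PP t x).card : ENNReal))⁻¹ 0) * F ⟨t, (x, u)⟩ ∂(markProd π hπ t) :=
        Finset.sum_congr rfl fun u _ => by rw [dif_pos u.2]

end Spine
end

section
/- Let T be a plane tree and, for each v ∈ T, let (B_v, d_v) be a metric space with a distinguished point ρ_v ∈ B_v (the inner root) and a map ℓ_v : {1,…,out_T(v)} → B_v (the outer roots). Then the function d* defined on the disjoint union ⊔_{v∈T} B_v by the branching formulas below is a pseudometric: d* is nonnegative, vanishes on the diagonal, is symmetric, and satisfies the triangle inequality d*(x,z) ≤ d*(x,y) + d*(y,z) for all x, y, z ∈ ⊔_{v∈T} B_v. -/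
open MeasureTheory Filter Set

section Decorated

variable {B : List ℕ → Type*} [∀ v, MetricSpace (B v)]

/-- `Z_w^x`: the projection of a point `x` of the decorated tree to the decoration `B_w`
of an ancestor vertex `w`: `x` itself if `w = v(x)`, and otherwise the outer root
`ℓ_w(i)` of `B_w`, where `wi` is the child of `w` towards `v(x)`. -/
noncomputable def Zpt (ℓ : ∀ v : List ℕ, ℕ → B v) (x : Σ v : List ℕ, B v)
    (w : List ℕ) : B w :=
  if h : w = x.1 then cast (congrArg B h.symm) x.2 else ℓ w (x.1.getD w.length 0)

/-- The sum `∑_{w ≺ u ⪯ v(x)} d_u(ρ_u, Z_u^x)` of root-to-projection distances in the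
decorations strictly between a vertex `w` and the vertex of `x`. -/
noncomputable def dAnc (ρ : ∀ v : List ℕ, B v) (ℓ : ∀ v : List ℕ, ℕ → B v)
    (w : List ℕ) (x : Σ v : List ℕ, B v) : ℝ :=
  ∑ i ∈ Finset.Icc (w.length + 1) (x.1.length),
    dist (ρ (x.1.take i)) (Zpt ℓ x (x.1.take i))

/-- Longest common prefix of two lists. -/
def lcp : List ℕ → List ℕ → List ℕ
  | a :: as, b :: bs => if a = b then a :: lcp as bs else []
  | _, _ => []

open Classical in
/-- The pseudometric `d*` of the discrete decorated tree, on the disjoint union of the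
decorations: the branching formulas of the paper. -/
noncomputable def dstar (ρ : ∀ v : List ℕ, B v) (ℓ : ∀ v : List ℕ, ℕ → B v)
    (x y : Σ v : List ℕ, B v) : ℝ :=
  if x.1 <+: y.1 then dist x.2 (Zpt ℓ y x.1) + dAnc ρ ℓ x.1 y
  else if y.1 <+: x.1 then dist y.2 (Zpt ℓ x y.1) + dAnc ρ ℓ y.1 x
  else
    dist (Zpt ℓ x (lcp x.1 y.1)) (Zpt ℓ y (lcp x.1 y.1)) +
      dAnc ρ ℓ (lcp x.1 y.1) x + dAnc ρ ℓ (lcp x.1 y.1) y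


section LcpLemmas

lemma lcp_nil_left (b : List ℕ) : lcp [] b = [] := by cases b <;> rfl

lemma lcp_nil_right (a : List ℕ) : lcp a [] = [] := by cases a <;> rfl

lemma lcp_comm (a : List ℕ) : ∀ b, lcp a b = lcp b a := by
  induction a with
  | nil => intro b; rw [lcp_nil_left, lcp_nil_right]
  | cons ha ta ih =>
    intro b
    cases b with
    | nil => rw [lcp_nil_left, lcp_nil_right]
    | cons hb tb =>
      simp only [lcp]
      by_cases h : ha = hb
      · subst h; simp [ih]
      · simp [h, Ne.symm h]

lemma lcp_prefix_left (a : List ℕ) : ∀ b, lcp a b <+: a := by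
  induction a with
  | nil => intro b; rw [lcp_nil_left]
  | cons ha ta ih =>
    intro b
    cases b with
    | nil => rw [lcp_nil_right]; exact List.nil_prefix
    | cons hb tb =>
      simp only [lcp]
      by_cases h : ha = hb
      · simp only [h, if_pos rfl]
        exact (List.cons_prefix_cons).2 ⟨rfl, ih tb⟩
      · simp [h, List.nil_prefix]

lemma lcp_prefix_right (a b : List ℕ) : lcp a b <+: b := by
  rw [lcp_comm]; exact lcp_prefix_left b a

lemma prefix_lcp {w : List ℕ} : ∀ {a b : List ℕ}, w <+: a → w <+: b → w <+: lcp a b := by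
  induction w with
  | nil => intro a b _ _; exact List.nil_prefix
  | cons hw tw ih =>
    intro a b h1 h2
    cases a with
    | nil => exact absurd h1 (by simp)
    | cons ha ta =>
      cases b with
      | nil => exact absurd h2 (by simp)
      | cons hb tb =>
        obtain ⟨rfl, h1'⟩ := List.cons_prefix_cons.1 h1
        obtain ⟨rfl, h2'⟩ := List.cons_prefix_cons.1 h2
        simp only [lcp, if_pos rfl, if_true, eq_self_iff_true]
        exact List.cons_prefix_cons.2 ⟨rfl, ih h1' h2'⟩

lemma lcp_of_prefix {a b : List ℕ} (h : a <+: b) : lcp a b = a :=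
  (lcp_prefix_left a b).eq_of_length
    (le_antisymm (lcp_prefix_left a b).length_le (prefix_lcp (List.prefix_refl a) h).length_le)

lemma lcp_eq_of_strict : ∀ (a b c : List ℕ), lcp a b <+: lcp b c → lcp a b ≠ lcp b c →
    lcp a c = lcp a b := by
  intro a
  induction a with
  | nil => intro b c _ _; rw [lcp_nil_left, lcp_nil_left]
  | cons ha ta ih =>
    intro b c h hne
    cases b with
    | nil => rw [lcp_nil_right] at hne; rw [lcp_nil_left] at hne; exact absurd rfl hne
    | cons hb tb =>
      cases c with
      | nil =>
        rw [lcp_nil_right] at h hne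
        exact absurd (List.prefix_nil.1 h) hne
      | cons hc tc =>
        by_cases hab : ha = hb
        · subst hab
          by_cases hbc : ha = hc
          · subst hbc
            simp only [lcp, if_pos rfl, if_true, eq_self_iff_true] at h hne ⊢
            rw [List.cons_prefix_cons] at h
            rw [ih tb tc h.2 (fun he => hne (by rw [he]))]
          · simp only [lcp, if_pos rfl, if_true, eq_self_iff_true, if_neg hbc] at h
            exact absurd (List.prefix_nil.1 h) (by simp)
        · by_cases hbc : hb = hc
          · have hac : ha ≠ hc := fun he => hab (he.trans hbc.symm)
            simp only [lcp, if_neg hab, if_neg hac]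
          · simp only [lcp, if_neg hab, if_neg hbc] at hne
            exact absurd rfl hne

lemma getD_of_prefix {u v : List ℕ} (h : u <+: v) {i : ℕ} (hi : i < u.length) :
    v.getD i 0 = u.getD i 0 := by
  obtain ⟨t, rfl⟩ := h
  exact List.getD_append u t 0 i hi

lemma take_of_prefix {u v : List ℕ} (h : u <+: v) {i : ℕ} (hi : i ≤ u.length) :
    v.take i = u.take i := by
  obtain ⟨t, rfl⟩ := h
  exact List.take_append_of_le_length hi

lemma take_full_of_prefix {u v : List ℕ} (h : u <+: v) : v.take u.length = u := by
  rw [take_of_prefix h le_rfl, List.take_length]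

end LcpLemmas

section DecoratedAux

variable {B : List ℕ → Type*} [∀ v, MetricSpace (B v)]
variable (ρ : ∀ v : List ℕ, B v) (ℓ : ∀ v : List ℕ, ℕ → B v)

lemma Zpt_self (x : Σ v : List ℕ, B v) : Zpt ℓ x x.1 = x.2 := by
  simp [Zpt]

lemma Zpt_congr (y z : Σ v : List ℕ, B v) (w : List ℕ)
    (hw : w <+: lcp y.1 z.1) (hlen : w.length < (lcp y.1 z.1).length) :
    Zpt ℓ y w = Zpt ℓ z w := by
  have hy : w.length < y.1.length := lt_of_lt_of_le hlen (lcp_prefix_left y.1 z.1).length_le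
  have hz : w.length < z.1.length := lt_of_lt_of_le hlen (lcp_prefix_right y.1 z.1).length_le
  have hny : w ≠ y.1 := fun he => absurd (congrArg List.length he) (by omega)
  have hnz : w ≠ z.1 := fun he => absurd (congrArg List.length he) (by omega)
  rw [Zpt, dif_neg hny, Zpt, dif_neg hnz]
  congr 1
  have e1 : w.length < (lcp y.1 z.1).length := hlen
  calc y.1.getD w.length 0
      = (lcp y.1 z.1).getD w.length 0 := getD_of_prefix (lcp_prefix_left y.1 z.1) e1
    _ = z.1.getD w.length 0 := (getD_of_prefix (lcp_prefix_right y.1 z.1) e1).symm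

lemma dAnc_Ioc (w : List ℕ) (x : Σ v : List ℕ, B v) :
    dAnc ρ ℓ w x = ∑ i ∈ Finset.Ioc w.length x.1.length,
      dist (ρ (x.1.take i)) (Zpt ℓ x (x.1.take i)) := by
  rw [dAnc, Finset.Icc_add_one_left_eq_Ioc]

lemma dAnc_nonneg (w : List ℕ) (x : Σ v : List ℕ, B v) : 0 ≤ dAnc ρ ℓ w x :=
  Finset.sum_nonneg fun _ _ => dist_nonneg

lemma dAnc_self (x : Σ v : List ℕ, B v) : dAnc ρ ℓ x.1 x = 0 := by
  rw [dAnc, Finset.Icc_eq_empty (by omega), Finset.sum_empty]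

lemma dAnc_split (w w' : List ℕ) (x : Σ v : List ℕ, B v)
    (h1 : w.length ≤ w'.length) (h2 : w'.length ≤ x.1.length) :
    dAnc ρ ℓ w x = (∑ i ∈ Finset.Ioc w.length w'.length,
      dist (ρ (x.1.take i)) (Zpt ℓ x (x.1.take i))) + dAnc ρ ℓ w' x := by
  rw [dAnc_Ioc, dAnc_Ioc, Finset.sum_Ioc_consecutive _ h1 h2]

lemma dstar_eq (x y : Σ v : List ℕ, B v) :
    dstar ρ ℓ x y = dist (Zpt ℓ x (lcp x.1 y.1)) (Zpt ℓ y (lcp x.1 y.1))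
      + dAnc ρ ℓ (lcp x.1 y.1) x + dAnc ρ ℓ (lcp x.1 y.1) y := by
  rw [dstar]
  split_ifs with h1 h2
  · rw [lcp_of_prefix h1, Zpt_self, dAnc_self]; ring
  · rw [lcp_comm, lcp_of_prefix h2, Zpt_self, dAnc_self, dist_comm]; ring
  · rfl

lemma dstar_comm (x y : Σ v : List ℕ, B v) : dstar ρ ℓ x y = dstar ρ ℓ y x := by
  rw [dstar_eq, dstar_eq, lcp_comm y.1 x.1, dist_comm]; ring

lemma dstar_tri_eq (x y z : Σ v : List ℕ, B v) (h : lcp x.1 y.1 = lcp y.1 z.1) :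
    dstar ρ ℓ x z ≤ dstar ρ ℓ x y + dstar ρ ℓ y z := by
  have hLx : lcp x.1 y.1 <+: x.1 := lcp_prefix_left _ _
  have hLz : lcp x.1 y.1 <+: z.1 := by rw [h]; exact lcp_prefix_right _ _
  have hLM : lcp x.1 y.1 <+: lcp x.1 z.1 := prefix_lcp hLx hLz
  rw [dstar_eq, dstar_eq, dstar_eq, ← h]
  set L := lcp x.1 y.1 with hL
  set M := lcp x.1 z.1 with hM
  by_cases heq : L = M
  · rw [← heq]
    have h1 := dist_triangle (Zpt ℓ x L) (Zpt ℓ y L) (Zpt ℓ z L)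
    linarith [dAnc_nonneg ρ ℓ L y]
  · have hlen : L.length < M.length :=
      lt_of_le_of_ne hLM.length_le fun he => heq (hLM.eq_of_length he)
    have hMx : M <+: x.1 := lcp_prefix_left _ _
    have hMz : M <+: z.1 := lcp_prefix_right _ _
    have hsx := dAnc_split ρ ℓ L M x hlen.le hMx.length_le
    have hsz := dAnc_split ρ ℓ L M z hlen.le hMz.length_le
    have hmem : M.length ∈ Finset.Ioc L.length M.length := by simp [hlen]
    have gx : dist (ρ M) (Zpt ℓ x M)
        = dist (ρ (x.1.take M.length)) (Zpt ℓ x (x.1.take M.length)) :=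
      (congrArg (fun l => dist (ρ l) (Zpt ℓ x l)) (take_full_of_prefix hMx)).symm
    have gz : dist (ρ M) (Zpt ℓ z M)
        = dist (ρ (z.1.take M.length)) (Zpt ℓ z (z.1.take M.length)) :=
      (congrArg (fun l => dist (ρ l) (Zpt ℓ z l)) (take_full_of_prefix hMz)).symm
    have h1 : dist (ρ M) (Zpt ℓ x M) ≤ ∑ i ∈ Finset.Ioc L.length M.length,
        dist (ρ (x.1.take i)) (Zpt ℓ x (x.1.take i)) :=
      gx.le.trans (Finset.single_le_sum
        (f := fun i => dist (ρ (x.1.take i)) (Zpt ℓ x (x.1.take i)))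
        (fun i _ => dist_nonneg) hmem)
    have h2 : dist (ρ M) (Zpt ℓ z M) ≤ ∑ i ∈ Finset.Ioc L.length M.length,
        dist (ρ (z.1.take i)) (Zpt ℓ z (z.1.take i)) :=
      gz.le.trans (Finset.single_le_sum
        (f := fun i => dist (ρ (z.1.take i)) (Zpt ℓ z (z.1.take i)))
        (fun i _ => dist_nonneg) hmem)
    have h3 := dist_triangle_left (Zpt ℓ x M) (Zpt ℓ z M) (ρ M)
    linarith [dAnc_nonneg ρ ℓ L y, dist_nonneg (x := Zpt ℓ x L) (y := Zpt ℓ y L),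
      dist_nonneg (x := Zpt ℓ y L) (y := Zpt ℓ z L)]

lemma dstar_tri_lt (x y z : Σ v : List ℕ, B v) (h : lcp x.1 y.1 <+: lcp y.1 z.1)
    (hne : lcp x.1 y.1 ≠ lcp y.1 z.1) :
    dstar ρ ℓ x z ≤ dstar ρ ℓ x y + dstar ρ ℓ y z := by
  have hM : lcp x.1 z.1 = lcp x.1 y.1 := lcp_eq_of_strict x.1 y.1 z.1 h hne
  have hlen : (lcp x.1 y.1).length < (lcp y.1 z.1).length :=
    lt_of_le_of_ne h.length_le fun he => hne (h.eq_of_length he)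
  have hKy : lcp y.1 z.1 <+: y.1 := lcp_prefix_left _ _
  have hKz : lcp y.1 z.1 <+: z.1 := lcp_prefix_right _ _
  have hZ : Zpt ℓ y (lcp x.1 y.1) = Zpt ℓ z (lcp x.1 y.1) :=
    Zpt_congr ℓ y z (lcp x.1 y.1) h hlen
  rw [dstar_eq, dstar_eq, dstar_eq, hM]
  set L := lcp x.1 y.1 with hL
  set K := lcp y.1 z.1 with hK
  have hsz := dAnc_split ρ ℓ L K z hlen.le hKz.length_le
  have hsy := dAnc_split ρ ℓ L K y hlen.le hKy.length_le
  have hmem : K.length ∈ Finset.Ioc L.length K.length := by simp [hlen]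
  have hstep : ∀ i ∈ Finset.Ioc L.length K.length,
      dist (ρ (z.1.take i)) (Zpt ℓ z (z.1.take i)) ≤
      dist (ρ (y.1.take i)) (Zpt ℓ y (y.1.take i)) +
        (if i = K.length then dist (Zpt ℓ y K) (Zpt ℓ z K) else 0) := by
    intro i hi
    simp only [Finset.mem_Ioc] at hi
    by_cases hiK : i = K.length
    · subst hiK
      have e1 : dist (ρ (y.1.take K.length)) (Zpt ℓ y (y.1.take K.length))
          = dist (ρ K) (Zpt ℓ y K) :=
        congrArg (fun l => dist (ρ l) (Zpt ℓ y l)) (take_full_of_prefix hKy)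
      have e2 : dist (ρ (z.1.take K.length)) (Zpt ℓ z (z.1.take K.length))
          = dist (ρ K) (Zpt ℓ z K) :=
        congrArg (fun l => dist (ρ l) (Zpt ℓ z l)) (take_full_of_prefix hKz)
      rw [if_pos rfl, e1, e2]
      exact dist_triangle (ρ K) (Zpt ℓ y K) (Zpt ℓ z K)
    · have e1 : dist (ρ (y.1.take i)) (Zpt ℓ y (y.1.take i))
          = dist (ρ (K.take i)) (Zpt ℓ y (K.take i)) :=
        congrArg (fun l => dist (ρ l) (Zpt ℓ y l)) (take_of_prefix hKy hi.2)
      have e2 : dist (ρ (z.1.take i)) (Zpt ℓ z (z.1.take i))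
          = dist (ρ (K.take i)) (Zpt ℓ z (K.take i)) :=
        congrArg (fun l => dist (ρ l) (Zpt ℓ z l)) (take_of_prefix hKz hi.2)
      have hwp : K.take i <+: K := List.take_prefix i K
      have hwl : (K.take i).length < K.length := by
        rw [List.length_take]; omega
      rw [if_neg hiK, e1, e2, Zpt_congr ℓ y z (K.take i) hwp hwl]
      simp
  have hsum := Finset.sum_le_sum hstep
  rw [Finset.sum_add_distrib, Finset.sum_ite_eq' (Finset.Ioc L.length K.length) K.length,
    if_pos hmem] at hsum
  rw [← hZ]
  linarith [dAnc_nonneg ρ ℓ K y]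

end DecoratedAux

/-- For a plane tree `T` with decorations `(B_v, d_v)`, inner roots
`ρ_v` and outer roots `ℓ_v`, the function `d*` on the disjoint union `⊔_{v ∈ T} B_v` is a
pseudometric: nonnegative, vanishing on the diagonal, symmetric, and satisfying the
triangle inequality. -/
theorem dstar_pseudometric (T : PlaneTree)
    (ρ : ∀ v : List ℕ, B v) (ℓ : ∀ v : List ℕ, ℕ → B v)
    (x y z : Σ v : List ℕ, B v)
    (hx : x.1 ∈ T.verts) (hy : y.1 ∈ T.verts) (hz : z.1 ∈ T.verts) :
    0 ≤ dstar ρ ℓ x y ∧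
    dstar ρ ℓ x x = 0 ∧
    dstar ρ ℓ x y = dstar ρ ℓ y x ∧
    dstar ρ ℓ x z ≤ dstar ρ ℓ x y + dstar ρ ℓ y z := by
  refine ⟨?_, ?_, dstar_comm ρ ℓ x y, ?_⟩
  · rw [dstar_eq]
    have h1 := dAnc_nonneg ρ ℓ (lcp x.1 y.1) x
    have h2 := dAnc_nonneg ρ ℓ (lcp x.1 y.1) y
    have h3 : (0:ℝ) ≤ dist (Zpt ℓ x (lcp x.1 y.1)) (Zpt ℓ y (lcp x.1 y.1)) := dist_nonneg
    linarith
  · rw [dstar_eq, lcp_of_prefix (List.prefix_refl x.1), Zpt_self, dAnc_self, dist_self]; ring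
  · rcases List.prefix_or_prefix_of_prefix (lcp_prefix_right x.1 y.1)
      (lcp_prefix_left y.1 z.1) with h | h
    · by_cases heq : lcp x.1 y.1 = lcp y.1 z.1
      · exact dstar_tri_eq ρ ℓ x y z heq
      · exact dstar_tri_lt ρ ℓ x y z h heq
    · by_cases heq : lcp x.1 y.1 = lcp y.1 z.1
      · exact dstar_tri_eq ρ ℓ x y z heq
      · have h' : lcp z.1 y.1 <+: lcp y.1 x.1 := by
          rw [lcp_comm z.1, lcp_comm y.1 x.1]; exact h
        have hne' : lcp z.1 y.1 ≠ lcp y.1 x.1 := by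
          rw [lcp_comm z.1, lcp_comm y.1 x.1]; exact fun he => heq he.symm
        have htri := dstar_tri_lt ρ ℓ z y x h' hne'
        rw [dstar_comm ρ ℓ x z, dstar_comm ρ ℓ x y, dstar_comm ρ ℓ y z]
        linarith

end Decorated
end
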